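/- Let H be a separable Hilbert space, (e_i)_{i∈ℕ} an orthonormal basis of H, K : H → H a continuous linear operator, and P_N the orthogonal projection onto span{e_1,…,e_N}. Let g ∈ H belong to span{e_1,…,e_{N₀}} for some N₀ ∈ ℕ and let N_p ∈ ℕ be a finite prediction horizon. Then the finite-horizon predictions converge: lim_{N→∞} max_{0 ≤ i ≤ N_p} ‖(P_N K P_N)^i g − K^i g‖ = 0, where (P_N K P_N)^i and K^i denote the i-fold compositions (with the 0-th power being the identity). -/

import Mathlib

open Filter Topology

/-- The orthogonal projection of `H` onto the (finite-dimensional, hence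
closed) subspace `span {e 0, …, e (N-1)}`, viewed as a continuous linear map
`H →L[𝕜] H`. -/
noncomputable def projSpanFirst (𝕜 : Type*) [RCLike 𝕜] {H : Type*}
    [NormedAddCommGroup H] [InnerProductSpace 𝕜 H] (e : ℕ → H) (N : ℕ) :
    H →L[𝕜] H :=
  haveI : FiniteDimensional 𝕜 (Submodule.span 𝕜 (e '' Set.Iio N)) :=
    FiniteDimensional.span_of_finite 𝕜 ((Set.finite_Iio N).image e)
  (Submodule.span 𝕜 (e '' Set.Iio N)).subtypeL.comp
    ((Submodule.span 𝕜 (e '' Set.Iio N)).orthogonalProjectionOnto)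

section aux

variable {𝕜 H : Type*} [RCLike 𝕜] [NormedAddCommGroup H] [InnerProductSpace 𝕜 H]
  [CompleteSpace H]

lemma projSpanFirst_norm_apply_le (e : ℕ → H) (N : ℕ) (x : H) :
    ‖projSpanFirst 𝕜 e N x‖ ≤ ‖x‖ := by
  haveI : FiniteDimensional 𝕜 (Submodule.span 𝕜 (e '' Set.Iio N)) :=
    FiniteDimensional.span_of_finite 𝕜 ((Set.finite_Iio N).image e)
  have : ‖projSpanFirst 𝕜 e N x‖
      = ‖Submodule.orthogonalProjectionOnto (Submodule.span 𝕜 (e '' Set.Iio N)) x‖ := rfl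
  rw [this]
  calc ‖Submodule.orthogonalProjectionOnto (Submodule.span 𝕜 (e '' Set.Iio N)) x‖
      ≤ ‖Submodule.orthogonalProjectionOnto (Submodule.span 𝕜 (e '' Set.Iio N))‖ * ‖x‖ :=
        (Submodule.orthogonalProjectionOnto (Submodule.span 𝕜 (e '' Set.Iio N))).le_opNorm x
    _ ≤ 1 * ‖x‖ := by
        gcongr
        exact Submodule.orthogonalProjectionOnto_norm_le _
    _ = ‖x‖ := one_mul _

lemma tendsto_projSpanFirst (e : HilbertBasis ℕ 𝕜 H) (x : H) :
    Tendsto (fun N => projSpanFirst 𝕜 (fun i => e i) N x) atTop (𝓝 x) := by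
  have hsum : Tendsto (fun N => ∑ i ∈ Finset.range N, e.repr x i • (e i : H))
      atTop (𝓝 x) := (e.hasSum_repr x).tendsto_sum_nat
  have key : ∀ N : ℕ, ‖projSpanFirst 𝕜 (fun i => e i) N x - x‖
      ≤ ‖x - ∑ i ∈ Finset.range N, e.repr x i • (e i : H)‖ := by
    intro N
    haveI : FiniteDimensional 𝕜
        (Submodule.span 𝕜 ((fun i => (e i : H)) '' Set.Iio N)) :=
      FiniteDimensional.span_of_finite 𝕜 ((Set.finite_Iio N).image _)
    have hmem : (∑ i ∈ Finset.range N, e.repr x i • (e i : H))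
        ∈ Submodule.span 𝕜 ((fun i => (e i : H)) '' Set.Iio N) := by
      refine Submodule.sum_mem _ fun i hi => Submodule.smul_mem _ _ ?_
      exact Submodule.subset_span ⟨i, Finset.mem_range.mp hi, rfl⟩
    rw [norm_sub_rev]
    have : ‖x - projSpanFirst 𝕜 (fun i => e i) N x‖
        = ⨅ w : (Submodule.span 𝕜 ((fun i => (e i : H)) '' Set.Iio N)),
            ‖x - w‖ := Submodule.starProjection_minimal x
    rw [this]
    exact ciInf_le ⟨0, fun r ⟨w, hw⟩ => hw ▸ norm_nonneg _⟩
      (⟨_, hmem⟩ : (Submodule.span 𝕜 ((fun i => (e i : H)) '' Set.Iio N)))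
  rw [← tendsto_sub_nhds_zero_iff]
  refine squeeze_zero_norm key ?_
  have := (tendsto_sub_nhds_zero_iff.mpr hsum).norm
  simpa [norm_sub_rev] using this

lemma tendsto_projSpanFirst_comp (e : HilbertBasis ℕ 𝕜 H) {x : H} {u : ℕ → H}
    (hu : Tendsto u atTop (𝓝 x)) :
    Tendsto (fun N => projSpanFirst 𝕜 (fun i => e i) N (u N)) atTop (𝓝 x) := by
  rw [← tendsto_sub_nhds_zero_iff]
  refine squeeze_zero_norm (a := fun N => ‖u N - x‖ +
      ‖projSpanFirst 𝕜 (fun i => e i) N x - x‖) (fun N => ?_) ?_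
  · calc ‖projSpanFirst 𝕜 (fun i => e i) N (u N) - x‖
        ≤ ‖projSpanFirst 𝕜 (fun i => e i) N (u N)
            - projSpanFirst 𝕜 (fun i => e i) N x‖
          + ‖projSpanFirst 𝕜 (fun i => e i) N x - x‖ := norm_sub_le_norm_sub_add_norm_sub _ _ _
      _ ≤ ‖u N - x‖ + ‖projSpanFirst 𝕜 (fun i => e i) N x - x‖ := by
          gcongr
          rw [← map_sub]
          exact projSpanFirst_norm_apply_le _ _ _
  · have h1 : Tendsto (fun N => ‖u N - x‖) atTop (𝓝 0) := by
      simpa using (tendsto_sub_nhds_zero_iff.mpr hu).norm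
    have h2 : Tendsto (fun N => ‖projSpanFirst 𝕜 (fun i => e i) N x - x‖)
        atTop (𝓝 0) := by
      simpa using (tendsto_sub_nhds_zero_iff.mpr (tendsto_projSpanFirst e x)).norm
    simpa using h1.add h2

end aux

/-- **Convergence of finite-horizon predictions (Corollary 1, abstract form).**
Let `H` be a Hilbert space with orthonormal basis `(e_i)_{i∈ℕ}`, `K : H → H`
a continuous linear operator and `P_N` the orthogonal projection onto
`span {e_0, …, e_{N-1}}`. If `g ∈ span {e_0, …, e_{N₀-1}}` for some `N₀` and
`N_p` is a finite prediction horizon, then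
`max_{0 ≤ i ≤ N_p} ‖(P_N K P_N)^i g − K^i g‖ → 0` as `N → ∞`. -/
theorem finite_horizon_predictions_converge {𝕜 H : Type*} [RCLike 𝕜]
    [NormedAddCommGroup H] [InnerProductSpace 𝕜 H] [CompleteSpace H]
    (e : HilbertBasis ℕ 𝕜 H) (K : H →L[𝕜] H) (N₀ Np : ℕ) (g : H)
    (hg : g ∈ Submodule.span 𝕜 ((fun i => (e i : H)) '' Set.Iio N₀)) :
    Tendsto (fun N : ℕ =>
        (Finset.range (Np + 1)).sup' Finset.nonempty_range_add_one fun i =>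
          ‖(((projSpanFirst 𝕜 (fun i => e i) N).comp
              (K.comp (projSpanFirst 𝕜 (fun i => e i) N))) ^ i) g - (K ^ i) g‖)
      atTop (𝓝 0) := by
  set A : ℕ → H →L[𝕜] H := fun N => (projSpanFirst 𝕜 (fun i => e i) N).comp
      (K.comp (projSpanFirst 𝕜 (fun i => e i) N)) with hA
  have hpt : ∀ i : ℕ, Tendsto (fun N => ((A N) ^ i) g) atTop (𝓝 ((K ^ i) g)) := by
    intro i
    induction i with
    | zero => simpa using tendsto_const_nhds
    | succ i ih =>
      have h1 : Tendsto (fun N => projSpanFirst 𝕜 (fun i => e i) N (((A N) ^ i) g))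
          atTop (𝓝 ((K ^ i) g)) := tendsto_projSpanFirst_comp e ih
      have h2 : Tendsto (fun N => K (projSpanFirst 𝕜 (fun i => e i) N (((A N) ^ i) g)))
          atTop (𝓝 (K ((K ^ i) g))) := (K.continuous.tendsto _).comp h1
      have h3 := tendsto_projSpanFirst_comp e h2
      have heq : ∀ N, ((A N) ^ (i + 1)) g
          = projSpanFirst 𝕜 (fun i => e i) N
              (K (projSpanFirst 𝕜 (fun i => e i) N (((A N) ^ i) g))) := by
        intro N
        rw [pow_succ']
        rfl
      have heq' : (K ^ (i + 1)) g = K ((K ^ i) g) := by rw [pow_succ']; rfl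
      rw [heq']
      exact h3.congr fun N => (heq N).symm
  -- squeeze the sup' between 0 and the sum
  have hnn : ∀ N : ℕ, (0 : ℝ) ≤ (Finset.range (Np + 1)).sup'
      Finset.nonempty_range_add_one
      (fun i => ‖((A N) ^ i) g - (K ^ i) g‖) := by
    intro N
    exact le_trans (norm_nonneg (((A N) ^ 0) g - (K ^ 0) g))
      (Finset.le_sup' (fun i => ‖((A N) ^ i) g - (K ^ i) g‖)
        (Finset.mem_range.mpr (Nat.succ_pos Np)))
  have hsum : Tendsto (fun N => ∑ i ∈ Finset.range (Np + 1),
      ‖((A N) ^ i) g - (K ^ i) g‖) atTop (𝓝 0) := by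
    have : Tendsto (fun N => ∑ i ∈ Finset.range (Np + 1),
        ‖((A N) ^ i) g - (K ^ i) g‖) atTop
        (𝓝 (∑ i ∈ Finset.range (Np + 1), (0 : ℝ))) := by
      refine tendsto_finset_sum _ fun i _ => ?_
      simpa using (tendsto_sub_nhds_zero_iff.mpr (hpt i)).norm
    simpa using this
  have hle : ∀ N : ℕ, (Finset.range (Np + 1)).sup' Finset.nonempty_range_add_one
      (fun i => ‖((A N) ^ i) g - (K ^ i) g‖)
      ≤ ∑ i ∈ Finset.range (Np + 1), ‖((A N) ^ i) g - (K ^ i) g‖ := by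
    intro N
    refine Finset.sup'_le _ _ fun i hi => ?_
    exact Finset.single_le_sum (f := fun i => ‖((A N) ^ i) g - (K ^ i) g‖)
      (fun j _ => norm_nonneg _) hi
  exact squeeze_zero hnn hle hsum
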